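/- For any x ∈ H and any formula φ of the TSC language, x forces φ in the model J (over I) if and only if x forces φ in the model H: J, x ⊩ φ ⟺ H, x ⊩ φ. -/

import Mathlib

open Ordinal

noncomputable def e1 (a : Ordinal) : Ordinal := omega0 ^ a - 1

noncomputable def eIter : ℕ → Ordinal → Ordinal
  | 0 => id
  | n + 1 => e1 ∘ eIter n

/-- Ordinal logarithm: exponent of the least term in the Cantor normal form. -/
noncomputable def ell (o : Ordinal) : Ordinal := (Ordinal.CNF omega0 o).getLast?.elim 0 Prod.fst

/-- Ignatiev (ℓ-)sequences. -/
def IsIgnatiev (x : ℕ → Ordinal) : Prop := ∀ i, x (i + 1) ≤ ell (x i)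

/-- The domain of Ignatiev's frame below Λ. -/
def Iset (Λ : Ordinal) : Set (ℕ → Ordinal) := {x | IsIgnatiev x ∧ ∀ i, x i < Λ}

/-- Finitely supported Ignatiev sequences below Λ. -/
def Hset (Λ : Ordinal) : Set (ℕ → Ordinal) := {x | x ∈ Iset Λ ∧ ∃ j, x j = 0}

/-- The accessibility relations. -/
def Rrel (n : ℕ) (x y : ℕ → Ordinal) : Prop :=
  (∀ m ≤ n, y m < x m) ∧ ∀ i, n < i → y i ≤ x i

/-- Transfinite iterates of the accessibility relation, with witnesses in `D`. -/
noncomputable def Iter (D : Set (ℕ → Ordinal)) (n : ℕ) :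
    Ordinal → (ℕ → Ordinal) → (ℕ → Ordinal) → Prop :=
  Ordinal.lt_wf.fix fun α rec x y =>
    if α = 0 then x = y
    else ∀ β, ∀ h : β < α, ∃ z ∈ D, Rrel n x z ∧ rec β h z y

inductive Formula : Type 1 where
  | top : Formula
  | and : Formula → Formula → Formula
  | dia : ℕ → Ordinal → Formula → Formula

def Formula.Bounded (Λ : Ordinal) : Formula → Prop
  | .top => True
  | .and φ ψ => φ.Bounded Λ ∧ ψ.Bounded Λ
  | .dia _ a φ => a < Λ ∧ φ.Bounded Λ

/-- Forcing over the frame with domain `D`. -/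
noncomputable def Forces (D : Set (ℕ → Ordinal)) : (ℕ → Ordinal) → Formula → Prop
  | _, .top => True
  | x, .and φ ψ => Forces D x φ ∧ Forces D x ψ
  | x, .dia n a φ => ∃ y ∈ D, Iter D n a x y ∧ Forces D y φ

/-- Monomial normal forms, coded as lists of (base, exponent) pairs. -/
def MNFc (Λ : Ordinal) (L : List (ℕ × Ordinal)) : Prop :=
  L.Chain' (fun p q => p.1 < q.1) ∧ (∀ p ∈ L, 0 < p.2 ∧ p.2 < Λ) ∧
    L.Chain' (fun p q => ∃ δ < Λ, p.2 = eIter (q.1 - p.1) q.2 * (2 + δ))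

/-- The formula coded by an MNF code. -/
def toFormula : List (ℕ × Ordinal) → Formula
  | [] => .top
  | p :: L => .and (.dia p.1 p.2 .top) (toFormula L)

/-- The projections π of an MNF, i.e. the translated Ignatiev sequence x_ψ. -/
noncomputable def proj : List (ℕ × Ordinal) → ℕ → Ordinal
  | [], _ => 0
  | (n, a) :: L, m => if m ≤ n then eIter (n - m) a else proj L m

lemma Iter_eq (D : Set (ℕ → Ordinal)) (n : ℕ) (α : Ordinal) :
    Iter D n α = fun x y =>
      if α = 0 then x = y else ∀ β, β < α → ∃ z ∈ D, Rrel n x z ∧ Iter D n β z y := by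
  rw [Iter, WellFounded.fix_eq]

lemma Iter_zero (D : Set (ℕ → Ordinal)) (n : ℕ) (x y : ℕ → Ordinal) :
    Iter D n 0 x y ↔ x = y := by
  rw [Iter_eq]; simp

lemma Iter_pos (D : Set (ℕ → Ordinal)) (n : ℕ) {α : Ordinal} (hα : α ≠ 0)
    (x y : ℕ → Ordinal) :
    Iter D n α x y ↔ ∀ β, β < α → ∃ z ∈ D, Rrel n x z ∧ Iter D n β z y := by
  conv_lhs => rw [Iter_eq]
  simp [hα]

lemma mem_H_of_R {Λ : Ordinal} {x z : ℕ → Ordinal} (hx : x ∈ Hset Λ)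
    (hz : z ∈ Iset Λ) {n : ℕ} (h : Rrel n x z) : z ∈ Hset Λ := by
  obtain ⟨_, j, hj⟩ := hx
  refine ⟨hz, j, ?_⟩
  rcases le_or_gt j n with hle | hlt
  · exact absurd (h.1 j hle) (by simp [hj])
  · exact le_antisymm (hj ▸ h.2 j hlt) zero_le

lemma Iter_iff {Λ : Ordinal} (n : ℕ) (α : Ordinal) :
    ∀ x ∈ Hset Λ, ∀ y, (Iter (Iset Λ) n α x y ↔ Iter (Hset Λ) n α x y) := by
  induction α using Ordinal.induction with
  | h α IH =>
    intro x hx y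
    rcases eq_or_ne α 0 with rfl | hα
    · rw [Iter_zero, Iter_zero]
    · rw [Iter_pos _ _ hα, Iter_pos _ _ hα]
      constructor
      · intro h β hβ
        obtain ⟨z, hzI, hR, hit⟩ := h β hβ
        have hzH : z ∈ Hset Λ := mem_H_of_R hx hzI hR
        exact ⟨z, hzH, hR, (IH β hβ z hzH y).mp hit⟩
      · intro h β hβ
        obtain ⟨z, hzH, hR, hit⟩ := h β hβ
        exact ⟨z, hzH.1, hR, (IH β hβ z hzH y).mpr hit⟩

lemma target_mem_H {Λ : Ordinal} {n : ℕ} {α : Ordinal} {x y : ℕ → Ordinal}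
    (hx : x ∈ Hset Λ) (hy : y ∈ Iset Λ) (h : Iter (Iset Λ) n α x y) : y ∈ Hset Λ := by
  rcases eq_or_ne α 0 with rfl | hα
  · exact (Iter_zero _ _ _ _).mp h ▸ hx
  · obtain ⟨z, hzI, hR, hit⟩ := (Iter_pos _ _ hα _ _).mp h 0 (pos_iff_ne_zero.mpr hα)
    have : z = y := (Iter_zero _ _ _ _).mp hit
    exact this ▸ mem_H_of_R hx hzI hR

lemma Forces_iff {Λ : Ordinal} (φ : Formula) :
    ∀ x ∈ Hset Λ, (Forces (Iset Λ) x φ ↔ Forces (Hset Λ) x φ) := by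
  induction φ with
  | top => intro x _; simp [Forces]
  | and φ ψ ihφ ihψ =>
    intro x hx
    simp only [Forces]
    rw [ihφ x hx, ihψ x hx]
  | dia n a φ ih =>
    intro x hx
    simp only [Forces]
    constructor
    · rintro ⟨y, hyI, hit, hf⟩
      have hyH : y ∈ Hset Λ := target_mem_H hx hyI hit
      exact ⟨y, hyH, (Iter_iff n a x hx y).mp hit, (ih y hyH).mp hf⟩
    · rintro ⟨y, hyH, hit, hf⟩
      exact ⟨y, hyH.1, (Iter_iff n a x hx y).mpr hit, (ih y hyH).mpr hf⟩

theorem forcing_preserved (Λ : Ordinal) (hpos : 0 < Λ) (heps : Ordinal.omega0 ^ Λ = Λ)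
    (x : ℕ → Ordinal) (hx : x ∈ Hset Λ) (φ : Formula) (hφ : φ.Bounded Λ) :
    Forces (Iset Λ) x φ ↔ Forces (Hset Λ) x φ := by
  exact Forces_iff φ x hx
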